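/- Let (X,≤) be a finite join-semilattice satisfying upper distributivity (for every u ∈ X the principal order filter ↑u is a distributive lattice), let m be a meet-irreducible element of X, and let Y ⊆ X be such that the meet ⋀Y exists. If ⋀Y < m, then there exists y ∈ Y with y ≤ m. -/

import Mathlib

/-- A preorder (reflexive transitive relation) on `X`, used as an agent's
preference over outcomes. -/
structure Pref (X : Type*) where
  rel : X → X → Prop
  refl : ∀ x, rel x x
  trans : ∀ x y z, rel x y → rel y z → rel x z

namespace Pref

/-- Strict (asymmetric) part of a preference preorder. -/
def strict {X : Type*} (R : Pref X) (x y : X) : Prop := R.rel x y ∧ ¬ R.rel y x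

/-- `t` is the unique maximum of the preorder `R`. -/
def IsTop {X : Type*} (R : Pref X) (t : X) : Prop :=
  (∀ y, R.rel t y) ∧ ∀ t', (∀ y, R.rel t' y) → t' = t

end Pref

/-- The interval `I^μ(x,y) = {z : z = μ(x,y,z)}` induced by a ternary median operation. -/
def medInterval {X : Type*} (μ : X → X → X → X) (x y : X) : Set X :=
  {z | μ x y z = z}

/-- A preorder on `X` is locally unimodal (single-peaked) w.r.t. the betweenness induced
by the median `μ`: it has a unique maximum `t`, and any outcome lying strictly between
`t` and another outcome `y` is not worse than `y`. -/
def LocallyUnimodal {X : Type*} (μ : X → X → X → X) (R : Pref X) : Prop :=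
  ∃ t, R.IsTop t ∧ ∀ y z, z ∈ medInterval μ t y → z ≠ t → ¬ R.strict y z

/-- A rich domain of locally unimodal preorders: for all `x,y` it contains a preorder
with top `x` whose upper contour set at `y` is exactly the interval `I^μ(x,y)`. -/
def RichDomain {X : Type*} (μ : X → X → X → X) (D : Set (Pref X)) : Prop :=
  (∀ R ∈ D, LocallyUnimodal μ R) ∧
  ∀ x y : X, ∃ R ∈ D, R.IsTop x ∧ {z | R.rel z y} = medInterval μ x y

/-- Strategy-proofness of an aggregation rule on profiles drawn from the domain `D`:
no agent `i` whose true preference lies in `D` (with top `tops i`) can strictly gain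
by reporting `y` instead of her top. -/
def StrategyProofOn {X N : Type*} [DecidableEq N]
    (f : (N → X) → X) (D : Set (Pref X)) : Prop :=
  ∀ prefs : N → Pref X, (∀ i, prefs i ∈ D) →
    ∀ tops : N → X, (∀ j, (prefs j).IsTop (tops j)) →
      ∀ (i : N) (y : X),
        ¬ (prefs i).strict (f (Function.update tops i y)) (f tops)

/-- `B_μ`-monotonicity: `f(x_N)` always lies in the median interval between `x_i` and
the outcome obtained when `i` deviates to `y`. -/
def BMuMonotonic {X N : Type*} [DecidableEq N]
    (μ : X → X → X → X) (f : (N → X) → X) : Prop :=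
  ∀ (x : N → X) (i : N) (y : X),
    f x ∈ medInterval μ (x i) (f (Function.update x i y))

/-- `m` is meet-irreducible: whenever `m` is the greatest lower bound of a set `Y`,
`m` itself belongs to `Y`. -/
def MeetIrred {X : Type*} [Preorder X] (m : X) : Prop :=
  ∀ Y : Set X, IsGLB Y m → m ∈ Y

/-- `j` is join-irreducible: whenever `j` is the least upper bound of a set `Y`,
`j` itself belongs to `Y`. -/
def JoinIrred {X : Type*} [Preorder X] (j : X) : Prop :=
  ∀ Y : Set X, IsLUB Y j → j ∈ Y

/-- Monotonic `M_X`-independence of an aggregation rule. -/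
def MonotonicMIndependent {X N : Type*} [Preorder X] (f : (N → X) → X) : Prop :=
  ∀ (x y : N → X) (m : X), MeetIrred m →
    {i | x i ≤ m} ⊆ {i | y i ≤ m} → f x ≤ m → f y ≤ m

/-- Upper distributivity: every principal order filter `↑u` is a distributive lattice,
expressed by the identity `x ⊔ (y ⊓ z) = (x ⊔ y) ⊓ (x ⊔ z)` for elements above a
common lower bound `u` (meets expressed via `IsGLB`). -/
def UpperDistributive (X : Type*) [SemilatticeSup X] : Prop :=
  ∀ u x y z m₁ m₂ : X, u ≤ x → u ≤ y → u ≤ z →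
    IsGLB {y, z} m₁ → IsGLB {x ⊔ y, x ⊔ z} m₂ → x ⊔ m₁ = m₂

/-- Co-coronation (meet-Helly): if the three pairwise meets of `x,y,z` exist then the
meet of `{x,y,z}` exists. -/
def MeetHelly (X : Type*) [SemilatticeSup X] : Prop :=
  ∀ x y z : X, (∃ a, IsGLB {x, y} a) → (∃ b, IsGLB {y, z} b) →
    (∃ c, IsGLB {x, z} c) → ∃ d, IsGLB ({x, y, z} : Set X) d

/-- `μ` is the median operation: `μ(x,y,z)` is the meet of `x⊔y`, `y⊔z`, `x⊔z`. -/
def IsMedianFn {X : Type*} [SemilatticeSup X] (μ : X → X → X → X) : Prop :=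
  ∀ x y z : X, IsGLB {x ⊔ y, y ⊔ z, x ⊔ z} (μ x y z)

/-- Anonymity: invariance of the rule under permutations of the agents. -/
def Anonymous {X N : Type*} (f : (N → X) → X) : Prop :=
  ∀ (x : N → X) (σ : Equiv.Perm N), f (x ∘ σ) = f x

/-- Bi-idempotence: if every agent proposes one of the two outcomes `y, z`, the rule
selects one of `y, z`. -/
def BiIdempotent {X N : Type*} (f : (N → X) → X) : Prop :=
  ∀ (x : N → X) (y z : X), (∀ i, x i = y ∨ x i = z) → f x = y ∨ f x = z

/-- The co-majority rule: `f(x_N)` is the meet over all majority coalitions `S`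
(of size at least `⌊(|N|+2)/2⌋`) of the joins `⋁_{i ∈ S} x_i`. -/
def IsCoMajority {X N : Type*} [SemilatticeSup X] [Fintype N] (f : (N → X) → X) : Prop :=
  ∀ x : N → X,
    IsGLB {z | ∃ S : Finset N, (Fintype.card N + 2) / 2 ≤ S.card ∧ IsLUB (x '' ↑S) z} (f x)

/-- An order filter of the poset of coalitions `(P(N), ⊆)`. -/
def OrderFilterN {N : Type*} (F : Set (Set N)) : Prop :=
  ∀ S T : Set N, S ∈ F → S ⊆ T → T ∈ F

/-- The locally `m`-winning coalitions of the rule `f`. -/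
def winningCoalitions {X N : Type*} [Preorder X] (f : (N → X) → X) (m : X) : Set (Set N) :=
  {T | ∃ x : N → X, {i | x i ≤ m} = T ∧ f x ≤ m}

/-- Shortest-path distance in the covering graph of a partial order. -/
noncomputable def covDist {X : Type*} [PartialOrder X] (x y : X) : ℕ :=
  sInf {n | ∃ p : ℕ → X, p 0 = x ∧ p n = y ∧ ∀ k < n, p k ⋖ p (k + 1) ∨ p (k + 1) ⋖ p k}

/-- In a finite join-semilattice, a nonempty set with a common lower bound has a GLB. -/
lemma aux_exists_isGLB {X : Type*} [SemilatticeSup X] [Fintype X]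
    (S : Set X) (c : X) (hc : c ∈ lowerBounds S) : ∃ b, IsGLB S b := by
  have hfin := Set.toFinite (lowerBounds S)
  have hne : hfin.toFinset.Nonempty := ⟨c, hfin.mem_toFinset.2 hc⟩
  refine ⟨hfin.toFinset.sup' hne id, ?_, ?_⟩
  · intro x hx
    exact Finset.sup'_le _ _ fun l hl => (hfin.mem_toFinset.1 hl) hx
  · intro l hl
    exact Finset.le_sup' id (hfin.mem_toFinset.2 hl)

lemma aux_lb_insert {X : Type*} [SemilatticeSup X] {T : Set X} {t : X}
    (ht : IsGLB T t) (a : X) :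
    lowerBounds (insert a T) = lowerBounds ({a, t} : Set X) := by
  ext b
  constructor
  · intro hb x hx
    rcases hx with rfl | hx
    · exact hb (Set.mem_insert _ _)
    · simp only [Set.mem_singleton_iff] at hx
      subst hx
      exact ht.2 fun y hy => hb (Set.mem_insert_of_mem _ hy)
  · intro hb x hx
    rcases hx with rfl | hx
    · exact hb (Set.mem_insert _ _)
    · exact le_trans (hb (Set.mem_insert_of_mem _ rfl)) (ht.1 hx)

lemma aux_key {X : Type*} [SemilatticeSup X] [Fintype X] (hud : UpperDistributive X)
    (g m : X) (hgm : g ≤ m) :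
    ∀ S : Finset X, S.Nonempty → (∀ y ∈ S, g ≤ y) → ∀ a, IsGLB (S : Set X) a →
      IsGLB ((fun y => m ⊔ y) '' (S : Set X)) (m ⊔ a) := by
  classical
  intro S
  induction S using Finset.induction_on with
  | empty => intro h; exact absurd h (by simp)
  | @insert z s hz ih =>
    intro _ hge a ha
    rcases s.eq_empty_or_nonempty with rfl | hs
    · simp only [LawfulSingleton.insert_empty_eq, Finset.coe_singleton] at ha ⊢
      have : a = z := le_antisymm (ha.1 rfl) (ha.2 fun y hy => le_of_eq hy.symm)
      subst this
      simp only [Set.image_singleton]; exact isGLB_singleton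
    · have hgs : g ∈ lowerBounds (s : Set X) := fun y hy => hge y (Finset.mem_insert_of_mem hy)
      obtain ⟨b, hb⟩ := aux_exists_isGLB (s : Set X) g hgs
      have hib := ih hs (fun y hy => hge y (Finset.mem_insert_of_mem hy)) b hb
      -- a is the glb of {z, b}
      have hcoe : ((insert z s : Finset X) : Set X) = insert z (s : Set X) := by
        simp
      have ha' : IsGLB ({z, b} : Set X) a := by
        rw [hcoe] at ha
        rcases ha with ⟨h1, h2⟩
        rw [aux_lb_insert hb z] at h1 h2
        exact ⟨h1, h2⟩
      -- glb of {m ⊔ z, m ⊔ b} exists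
      have hmlb : m ∈ lowerBounds ({m ⊔ z, m ⊔ b} : Set X) := by
        intro x hx
        rcases hx with rfl | hx
        · exact le_sup_left
        · simp only [Set.mem_singleton_iff] at hx; subst hx; exact le_sup_left
      obtain ⟨m₂, hm₂⟩ := aux_exists_isGLB _ m hmlb
      have hgz : g ≤ z := hge z (Finset.mem_insert_self z s)
      have hgb : g ≤ b := hb.2 hgs
      have heq : m ⊔ a = m₂ := hud g m z b a m₂ hgm hgz hgb ha' hm₂
      have hglb2 : IsGLB ({m ⊔ z, m ⊔ b} : Set X) (m ⊔ a) := heq ▸ hm₂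
      -- conclude
      have himg : (fun y => m ⊔ y) '' ((insert z s : Finset X) : Set X)
          = insert (m ⊔ z) ((fun y => m ⊔ y) '' (s : Set X)) := by
        rw [hcoe, Set.image_insert_eq]
      rw [himg]
      rcases hglb2 with ⟨h1, h2⟩
      rw [← aux_lb_insert hib (m ⊔ z)] at h1 h2
      exact ⟨h1, h2⟩

/-- In a finite upper distributive join-semilattice, if `m` is meet-irreducible and a
subset `Y` has a meet `g` with `g < m`, then some `y ∈ Y` satisfies `y ≤ m`. -/
theorem exists_le_of_meetIrred_of_glb_lt
    {X : Type*} [SemilatticeSup X] [Fintype X] (hud : UpperDistributive X)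
    (m : X) (hm : MeetIrred m) (Y : Set X) (g : X) (hg : IsGLB Y g) (hlt : g < m) :
    ∃ y ∈ Y, y ≤ m := by
  classical
  -- Y is nonempty
  have hYne : Y.Nonempty := by
    rcases Y.eq_empty_or_nonempty with rfl | h
    · exact absurd (hg.2 (fun b hb => (Set.notMem_empty b hb).elim : m ∈ lowerBounds ∅))
        hlt.not_ge
    · exact h
  have hYfin : Y.Finite := Set.toFinite Y
  have hSne : hYfin.toFinset.Nonempty := by
    rwa [← Set.Finite.toFinset_nonempty hYfin] at hYne
  have hcoe : (hYfin.toFinset : Set X) = Y := hYfin.coe_toFinset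
  have hge : ∀ y ∈ hYfin.toFinset, g ≤ y := by
    intro y hy
    exact hg.1 (hYfin.mem_toFinset.1 hy)
  have hglbY : IsGLB (↑hYfin.toFinset : Set X) g := by rw [hcoe]; exact hg
  have hkey := aux_key hud g m hlt.le hYfin.toFinset hSne hge g hglbY
  rw [hcoe, sup_eq_left.mpr hlt.le] at hkey
  have hmem := hm _ hkey
  obtain ⟨y, hy, hym⟩ := hmem
  exact ⟨y, hy, le_trans le_sup_right (le_of_eq hym)⟩
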